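/- arXiv:0707.0676 — 3 statements merged into one kernel-verified Lean document; each statement's English description precedes it below -/
import Mathlib

section
/- In the Euclidean plane, at most 6 closed unit discs with pairwise disjoint interiors can all be tangent to a fixed closed unit disc. Equivalently: there do not exist 7 points p₁, ..., p₇ ∈ ℝ² with ‖pᵢ‖ = 2 for all i and ‖pᵢ − pⱼ‖ ≥ 2 for all i ≠ j. -/
open Complex Real

lemma exp_sub_exp_abs_sq (a b : ℝ) :
    ‖Complex.exp (a * Complex.I) - Complex.exp (b * Complex.I)‖ ^ 2
      = 2 - 2 * Real.cos (a - b) := by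
  rw [Complex.sq_norm]
  simp [Complex.normSq_apply, Complex.sub_re, Complex.sub_im,
    Complex.exp_ofReal_mul_I_re, Complex.exp_ofReal_mul_I_im, Real.cos_sub]
  nlinarith [Real.sin_sq_add_cos_sq a, Real.sin_sq_add_cos_sq b]

theorem kissing_number_two_dim :
    ¬ ∃ p : Fin 7 → EuclideanSpace ℝ (Fin 2),
      (∀ i, ‖p i‖ = 2) ∧ ∀ i j, i ≠ j → 2 ≤ ‖p i - p j‖ := by
  rintro ⟨p, hnorm, hdist⟩
  -- move to ℂ
  set e := Complex.orthonormalBasisOneI.repr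
  set z : Fin 7 → ℂ := fun i => e.symm (p i) with hz
  have hznorm : ∀ i, ‖z i‖ = 2 := by
    intro i
    have h := e.symm.norm_map (p i)
    rw [hnorm i] at h
    exact h
  have hzdist : ∀ i j, i ≠ j → 2 ≤ ‖z i - z j‖ := by
    intro i j hij
    have : z i - z j = e.symm (p i - p j) := by simp [hz]
    rw [this]
    have := e.symm.norm_map (p i - p j)
    rw [show ‖e.symm (p i - p j)‖ = ‖e.symm (p i - p j)‖ from rfl] at this
    rw [this]
    exact hdist i j hij
  -- pigeonhole on arguments
  set f : Fin 7 → ℤ := fun i => ⌈(Complex.arg (z i) + π) * 3 / π⌉ with hf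
  have hpi : (0:ℝ) < π := Real.pi_pos
  have hmaps : ∀ i, f i ∈ Finset.Icc (1:ℤ) 6 := by
    intro i
    have h1 : -π < Complex.arg (z i) := Complex.neg_pi_lt_arg _
    have h2 : Complex.arg (z i) ≤ π := Complex.arg_le_pi _
    have hx1 : (0:ℝ) < (Complex.arg (z i) + π) * 3 / π := by
      apply div_pos _ hpi
      nlinarith
    have hx2 : (Complex.arg (z i) + π) * 3 / π ≤ 6 := by
      rw [div_le_iff₀ hpi]
      nlinarith
    simp only [Finset.mem_Icc, hf]
    constructor
    · exact_mod_cast Int.ceil_pos.mpr hx1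
    · exact Int.ceil_le.mpr (by exact_mod_cast hx2)
  obtain ⟨i, -, j, -, hij, hfeq⟩ :=
    Finset.exists_ne_map_eq_of_card_lt_of_maps_to
      (s := (Finset.univ : Finset (Fin 7))) (t := Finset.Icc (1:ℤ) 6)
      (by simp) (fun i _ => hmaps i)
  -- from equal ceilings, angles are close
  set a := Complex.arg (z i)
  set b := Complex.arg (z j)
  have hclose : |a - b| < π / 3 := by
    have hx : (a + π) * 3 / π ≤ (⌈(a + π) * 3 / π⌉ : ℝ) := Int.le_ceil _
    have hy : (b + π) * 3 / π ≤ (⌈(b + π) * 3 / π⌉ : ℝ) := Int.le_ceil _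
    have hx' : ((⌈(a + π) * 3 / π⌉ : ℝ)) < (a + π) * 3 / π + 1 := Int.ceil_lt_add_one _
    have hy' : ((⌈(b + π) * 3 / π⌉ : ℝ)) < (b + π) * 3 / π + 1 := Int.ceil_lt_add_one _
    have heq : ((⌈(a + π) * 3 / π⌉ : ℝ)) = ((⌈(b + π) * 3 / π⌉ : ℝ)) := by
      exact_mod_cast hfeq
    have h1 : (a + π) * 3 / π - (b + π) * 3 / π < 1 := by linarith
    have h2 : (b + π) * 3 / π - (a + π) * 3 / π < 1 := by linarith
    have hd1 : (a - b) * 3 / π < 1 := by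
      have : (a + π) * 3 / π - (b + π) * 3 / π = (a - b) * 3 / π := by ring
      linarith [this ▸ h1]
    have hd2 : (b - a) * 3 / π < 1 := by
      have : (b + π) * 3 / π - (a + π) * 3 / π = (b - a) * 3 / π := by ring
      linarith [this ▸ h2]
    have hd1' : (a - b) * 3 < π := by
      have := (div_lt_one hpi).mp hd1; linarith
    have hd2' : (b - a) * 3 < π := by
      have := (div_lt_one hpi).mp hd2; linarith
    rw [abs_sub_lt_iff]
    constructor <;> linarith
  -- compute distance
  have hzi : (‖z i‖ : ℂ) * Complex.exp (a * Complex.I) = z i :=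
    Complex.norm_mul_exp_arg_mul_I (z i)
  have hzj : (‖z j‖ : ℂ) * Complex.exp (b * Complex.I) = z j :=
    Complex.norm_mul_exp_arg_mul_I (z j)
  rw [hznorm i] at hzi
  rw [hznorm j] at hzj
  have hsub : z i - z j = 2 * (Complex.exp (a * Complex.I) - Complex.exp (b * Complex.I)) := by
    rw [← hzi, ← hzj]; push_cast; ring
  have hcos : Real.cos (a - b) > 1/2 := by
    have hcc : Real.cos (π/3) < Real.cos |a - b| :=
      Real.cos_lt_cos_of_nonneg_of_le_pi (abs_nonneg _)
        (by linarith [Real.pi_pos]) hclose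
    rw [Real.cos_abs, Real.cos_pi_div_three] at hcc
    linarith
  have hlt : ‖z i - z j‖ ^ 2 < 4 := by
    rw [hsub, norm_mul]
    have h2 : ‖(2:ℂ)‖ = 2 := by norm_num
    rw [h2, mul_pow, exp_sub_exp_abs_sq]
    nlinarith
  have hge := hzdist i j hij
  nlinarith [hge, hlt, norm_nonneg (z i - z j)]
end

section
/- For a > 0, the sequence k ↦ arctan(ka) − arctan((k−1)a), defined for integers k ≥ 1, is strictly decreasing. -/
open Real

lemma arctan_gap_anti (a : ℝ) (ha : 0 < a) :
    StrictAntiOn (fun x : ℝ => arctan ((x + 1) * a) - arctan (x * a)) (Set.Ici 0) := by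
  have hderiv : ∀ x : ℝ, HasDerivAt (fun x : ℝ => arctan ((x + 1) * a) - arctan (x * a))
      (a / (1 + ((x + 1) * a) ^ 2) - a / (1 + (x * a) ^ 2)) x := by
    intro x
    have h1 : HasDerivAt (fun x : ℝ => (x + 1) * a) a x := by
      simpa using ((hasDerivAt_id x).add_const 1).mul_const a
    have h2 : HasDerivAt (fun x : ℝ => x * a) a x := by
      simpa using (hasDerivAt_id x).mul_const a
    have h3 := (Real.hasDerivAt_arctan ((x + 1) * a)).comp x h1
    have h4 := (Real.hasDerivAt_arctan (x * a)).comp x h2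
    have := h3.sub h4
    exact this.congr_deriv (by ring)
  apply strictAntiOn_of_deriv_neg (convex_Ici 0)
  · exact (Real.continuous_arctan.comp (by continuity)).sub
      (Real.continuous_arctan.comp (by continuity)) |>.continuousOn
  · intro x hx
    rw [interior_Ici] at hx
    rw [(hderiv x).deriv]
    have hx0 : (0:ℝ) < x := hx
    have hlt : (x * a) ^ 2 < ((x + 1) * a) ^ 2 := by
      have : x * a < (x + 1) * a := by nlinarith
      have h0 : 0 ≤ x * a := by positivity
      nlinarith
    have h1 : (0:ℝ) < 1 + (x * a) ^ 2 := by positivity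
    have h2 : (0:ℝ) < 1 + ((x + 1) * a) ^ 2 := by positivity
    have : a / (1 + ((x + 1) * a) ^ 2) < a / (1 + (x * a) ^ 2) :=
      div_lt_div_of_pos_left ha h1 (by linarith)
    linarith

theorem arctan_diff_strict_anti (a : ℝ) (ha : 0 < a) (k l : ℕ)
    (hk : 1 ≤ k) (hkl : k < l) :
    arctan (l * a) - arctan ((l - 1 : ℕ) * a) <
      arctan (k * a) - arctan ((k - 1 : ℕ) * a) := by
  have hl : 1 ≤ l := le_of_lt (lt_of_le_of_lt hk hkl)
  have hck : ((k - 1 : ℕ) : ℝ) = (k : ℝ) - 1 := by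
    push_cast [Nat.cast_sub hk]; ring
  have hcl : ((l - 1 : ℕ) : ℝ) = (l : ℝ) - 1 := by
    push_cast [Nat.cast_sub hl]; ring
  have hmem1 : ((k : ℝ) - 1) ∈ Set.Ici (0:ℝ) := by
    simp only [Set.mem_Ici]
    have : (1:ℝ) ≤ k := by exact_mod_cast hk
    linarith
  have hmem2 : ((l : ℝ) - 1) ∈ Set.Ici (0:ℝ) := by
    simp only [Set.mem_Ici]
    have : (1:ℝ) ≤ l := by exact_mod_cast hl
    linarith
  have hlt : ((k : ℝ) - 1) < ((l : ℝ) - 1) := by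
    have : (k:ℝ) < l := by exact_mod_cast hkl
    linarith
  have := arctan_gap_anti a ha hmem1 hmem2 hlt
  simp only [sub_add_cancel] at this
  rw [hck, hcl]
  convert this using 3 <;> ring
end

section
/- Let θ_17 = arctan(17·tan(π/6)/30) − arctan(16·tan(π/6)/30). Then |θ_17 − π/180| < 0.002·(π/180); i.e., the 17th angle of the paper's construction differs from 1 degree by a relative error of less than 0.2%. -/
open Real

theorem theta_seventeen_close_to_one_degree :
    |(arctan (17 * tan (π / 6) / 30) - arctan (16 * tan (π / 6) / 30)) - π / 180| <
      0.002 * (π / 180) := by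
  have hs0 : (0:ℝ) < Real.sqrt 3 := Real.sqrt_pos.mpr (by norm_num)
  have hs2 : Real.sqrt 3 ^ 2 = 3 := Real.sq_sqrt (by norm_num)
  have hslb : (1.7320508 : ℝ) < Real.sqrt 3 := by nlinarith
  have hsub : (1.7320509 : ℝ) > Real.sqrt 3 := by nlinarith
  have hpil : π < 3.141593 := Real.pi_lt_d6
  have hpig : π > 3.141592 := Real.pi_gt_d6
  have ht : tan (π / 6) = 1 / Real.sqrt 3 := Real.tan_pi_div_six
  set s := Real.sqrt 3 with hsdef
  -- the combined argument
  set x : ℝ := 15 * s / 1486 with hxdef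
  have hx_pos : 0 < x := by positivity
  -- combine the two arctans
  have hmul : (17 * tan (π / 6) / 30) * (-(16 * tan (π / 6) / 30)) < 1 := by
    rw [ht]
    nlinarith [sq_nonneg (1 / s)]
  have hcomb : arctan (17 * tan (π / 6) / 30) - arctan (16 * tan (π / 6) / 30) = arctan x := by
    have := Real.arctan_add hmul
    rw [Real.arctan_neg] at this
    have harg : (17 * tan (π / 6) / 30 + -(16 * tan (π / 6) / 30)) /
        (1 - 17 * tan (π / 6) / 30 * -(16 * tan (π / 6) / 30)) = x := by
      rw [ht, hxdef]
      have hs0' : s ≠ 0 := ne_of_gt hs0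
      field_simp
      rw [hs2]; norm_num
    rw [harg] at this
    linarith [this]
  rw [hcomb]
  -- upper bound : arctan x < x
  have hupper : arctan x < x := by
    have h1 : 0 < arctan x := by
      have := Real.arctan_strictMono hx_pos
      rwa [Real.arctan_zero] at this
    have h2 : arctan x < π / 2 := Real.arctan_lt_pi_div_two x
    have := Real.lt_tan h1 h2
    rwa [Real.tan_arctan] at this
  -- lower bound : π/180 < arctan x
  have hlower : π / 180 < arctan x := by
    have hrange1 : (0:ℝ) < π / 180 := by positivity
    have hrange2 : π / 180 < π / 2 := by linarith [Real.pi_pos]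
    have hcos : (1 : ℝ) - (π/180) ^ 2 / 2 < Real.cos (π/180) :=
      Real.one_sub_sq_div_two_lt_cos (ne_of_gt hrange1)
    have hcospos : (0:ℝ) < 1 - (π/180) ^ 2 / 2 := by nlinarith
    have hsin : Real.sin (π/180) < π/180 := Real.sin_lt hrange1
    have hsinpos : 0 < Real.sin (π/180) := Real.sin_pos_of_pos_of_lt_pi hrange1 (by linarith [Real.pi_pos])
    have htanlt : Real.tan (π/180) < (π/180) / (1 - (π/180)^2/2) := by
      rw [Real.tan_eq_sin_div_cos, div_lt_div_iff₀ (Real.cos_pos_of_mem_Ioo ⟨by linarith [Real.pi_pos], hrange2⟩) hcospos]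
      nlinarith
    have hnum : (π/180) / (1 - (π/180)^2/2) < x := by
      rw [div_lt_iff₀ hcospos, hxdef]
      nlinarith
    calc π / 180 = arctan (Real.tan (π/180)) := (Real.arctan_tan (by linarith) hrange2).symm
      _ < arctan x := Real.arctan_strictMono (lt_trans htanlt hnum)
  -- numeric upper bound on x
  have hxub : x < 1.002 * (π / 180) := by
    rw [hxdef]
    nlinarith
  rw [abs_lt]
  constructor <;> nlinarith
end
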